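/- The partial order P'_T, consisting of all finite partial functions f from A to ω such that f(x) ≠ f(y) whenever x < y both lie in the domain of f, ordered by reverse inclusion, satisfies the countable chain condition: every set of pairwise incompatible elements of P'_T is countable. (Here f and g are compatible iff f ∪ g is a function belonging to P'_T.) -/

import Mathlib

namespace Tw1

/-- A tree of height `ω₁`: a partial order in which the strict predecessors of
every element are linearly ordered, well-ordered, and of countable order type. -/
def IsTree (T : Type*) [PartialOrder T] : Prop :=
  ∀ t : T,
    (∀ a b : T, a < t → b < t → a ≤ b ∨ b ≤ a) ∧
    Set.Countable {s : T | s < t} ∧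
    ∀ S : Set T, S ⊆ {s : T | s < t} → S.Nonempty → ∃ m ∈ S, ∀ s ∈ S, m ≤ s

/-- The ordinals below `ω₁`, used as index set `{i : i < ω₁}`. -/
def Iw1 : Type 1 := ↥(Set.Iio (Cardinal.aleph.{0} 1).ord)

noncomputable instance : LinearOrder Iw1 := by unfold Iw1; infer_instance

/-- An `ω₁`-branch: a maximal linearly ordered subset of order type `ω₁`. -/
def IsOmega1Branch {T : Type*} [PartialOrder T] (B : Set T) : Prop :=
  IsMaxChain (· ≤ ·) B ∧ Nonempty (Iw1 ≃o ↥B)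

/-- `B'_j = B_j \ ⋃_{i<j} B_i`. -/
def Bseg {T : Type*} (Bf : Iw1 → Set T) (j : Iw1) : Set T :=
  Bf j \ ⋃ (i : Iw1) (_ : i < j), Bf i

/-- The forcing notion `P'_T` "sealing the branches": finite partial functions
(realized as finitely-supported `T → Option ℕ`) from `A` to `ω` that are
injective on comparable pairs. -/
def Pcond {T : Type*} [PartialOrder T] (A : Set T) : Set (T → Option ℕ) :=
  {f | {t | f t ≠ none}.Finite ∧ {t | f t ≠ none} ⊆ A ∧
    ∀ x y : T, x < y → f x ≠ none → f y ≠ none → f x ≠ f y}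

/-- Two conditions are compatible iff their union `f ∪ g` is a function which
again belongs to `P'_T`. -/
def Compat {T : Type*} [PartialOrder T] (A : Set T) (f g : T → Option ℕ) : Prop :=
  (∀ t, f t ≠ none → g t ≠ none → f t = g t) ∧
  (fun t => (f t).orElse (fun _ => g t)) ∈ Pcond A

end Tw1

section Aux
open Set


lemma countable_of_fiber_countable {α β : Type*} [Countable β] (g : α → β) (s : Set α)
    (h : ∀ b, {x | x ∈ s ∧ g x = b}.Countable) : s.Countable := by
  have : s ⊆ ⋃ b : β, {x | x ∈ s ∧ g x = b} := fun x hx => mem_iUnion.2 ⟨g x, hx, rfl⟩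
  exact (Set.countable_iUnion h).mono this

lemma uncountable_fiber {α β : Type*} [Countable β] (g : α → β) (s : Set α)
    (hs : ¬ s.Countable) : ∃ b, ¬ {x | x ∈ s ∧ g x = b}.Countable := by
  by_contra h
  push_neg at h
  exact hs (countable_of_fiber_countable g s h)

lemma delta_system {α : Type*} [DecidableEq α] :
    ∀ (n : ℕ) (𝒜 : Set (Finset α)), (∀ s ∈ 𝒜, s.card ≤ n) →
    ¬𝒜.Countable →
    ∃ R : Finset α, ∃ ℬ, ℬ ⊆ 𝒜 ∧ ¬ℬ.Countable ∧ ∀ s ∈ ℬ, ∀ t ∈ ℬ, s ≠ t → s ∩ t = R := by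
  intro n
  induction n with
  | zero =>
    intro 𝒜 hcard hunc
    exfalso
    apply hunc
    have : 𝒜 ⊆ {∅} := by
      intro s hs
      simp only [Set.mem_singleton_iff]
      exact Finset.card_eq_zero.1 (Nat.le_zero.1 (hcard s hs))
    exact (Set.countable_singleton _).mono this
  | succ n ih =>
    intro 𝒜 hcard hunc
    by_cases hpop : ∃ x : α, ¬ {s | s ∈ 𝒜 ∧ x ∈ s}.Countable
    · obtain ⟨x, hx⟩ := hpop
      set 𝒜x : Set (Finset α) := {s | s ∈ 𝒜 ∧ x ∈ s} with h𝒜x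
      set 𝒜' : Set (Finset α) := (fun s => s.erase x) '' 𝒜x with h𝒜'
      have h𝒜'unc : ¬ 𝒜'.Countable := by
        intro hc
        apply hx
        have : 𝒜x ⊆ (fun s => insert x s) '' 𝒜' := by
          intro s hs
          exact ⟨s.erase x, ⟨s, hs, rfl⟩, Finset.insert_erase hs.2⟩
        exact (hc.image _).mono this
      have h𝒜'card : ∀ s ∈ 𝒜', s.card ≤ n := by
        rintro s ⟨t, ht, rfl⟩
        have h1 := Finset.card_erase_of_mem ht.2
        have h2 := hcard t ht.1
        have h3 : 1 ≤ t.card := Finset.card_pos.2 ⟨x, ht.2⟩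
        simp only [h1]
        omega
      obtain ⟨R', ℬ', hℬ'sub, hℬ'unc, hℬ'delta⟩ := ih 𝒜' h𝒜'card h𝒜'unc
      refine ⟨insert x R', (fun s => insert x s) '' ℬ', ?_, ?_, ?_⟩
      · rintro s ⟨t, ht, rfl⟩
        obtain ⟨u, hu, huer⟩ := hℬ'sub ht
        show insert x t ∈ 𝒜
        rw [← huer, Finset.insert_erase hu.2]
        exact hu.1
      · intro hc
        apply hℬ'unc
        have hxni : ∀ t ∈ ℬ', x ∉ t := by
          intro t ht
          obtain ⟨u, hu, rfl⟩ := hℬ'sub ht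
          exact Finset.notMem_erase x u
        have : ℬ' ⊆ (fun s : Finset α => s.erase x) '' ((fun s => insert x s) '' ℬ') := by
          intro s hs
          exact ⟨insert x s, ⟨s, hs, rfl⟩, Finset.erase_insert (hxni s hs)⟩
        exact ((hc.image _).mono this)
      · rintro s ⟨u, hu, rfl⟩ t ⟨v, hv, rfl⟩ hne
        have hxnu : x ∉ u := by
          obtain ⟨w, hw, rfl⟩ := hℬ'sub hu; exact Finset.notMem_erase x w
        have hxnv : x ∉ v := by
          obtain ⟨w, hw, rfl⟩ := hℬ'sub hv; exact Finset.notMem_erase x w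
        have huv : u ≠ v := by
          rintro rfl; exact hne rfl
        show insert x u ∩ insert x v = insert x R'
        rw [Finset.insert_inter_of_mem (Finset.mem_insert_self x v),
          Finset.inter_insert_of_notMem hxnu, hℬ'delta u hu v hv huv]
    · -- no popular point: extract an uncountable pairwise disjoint family
      push_neg at hpop
      obtain ⟨𝒢, h𝒢⟩ := zorn_subset_nonempty
        {𝒢 : Set (Finset α) | 𝒢 ⊆ 𝒜 ∧ ∀ s ∈ 𝒢, ∀ t ∈ 𝒢, s ≠ t → s ∩ t = ∅}
        (fun c hc hchain _hne => by
          refine ⟨⋃₀ c, ⟨?_, ?_⟩, fun s hs => subset_sUnion_of_mem hs⟩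
          · exact sUnion_subset fun s hs => (hc hs).1
          · rintro s ⟨cs, hcs, hscs⟩ t ⟨ct, hct, htct⟩ hne
            rcases hchain.total hcs hct with h | h
            · exact (hc hct).2 s (h hscs) t htct hne
            · exact (hc hcs).2 s hscs t (h htct) hne)
        ∅ ⟨empty_subset _, by simp⟩
      obtain ⟨-, h𝒢max⟩ := h𝒢
      have h𝒢sub : 𝒢 ⊆ 𝒜 := h𝒢max.prop.1
      have h𝒢disj := h𝒢max.prop.2
      by_cases h𝒢c : 𝒢.Countable
      · exfalso
        apply hunc
        have hU : (⋃ s ∈ 𝒢, (s : Set α)).Countable :=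
          Set.Countable.biUnion h𝒢c (fun s _ => s.finite_toSet.countable)
        have cover : 𝒜 ⊆ 𝒢 ∪ ⋃ x ∈ (⋃ s ∈ 𝒢, (s : Set α)), {s | s ∈ 𝒜 ∧ x ∈ s} := by
          intro s hs
          by_cases hsG : s ∈ 𝒢
          · exact Or.inl hsG
          · by_cases hdisj : ∀ t ∈ 𝒢, s ∩ t = ∅
            · exfalso
              apply hsG
              have hmem : 𝒢 ∪ {s} ∈
                  {𝒢 : Set (Finset α) | 𝒢 ⊆ 𝒜 ∧ ∀ s ∈ 𝒢, ∀ t ∈ 𝒢, s ≠ t → s ∩ t = ∅} := by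
                constructor
                · exact union_subset h𝒢sub (by simpa using hs)
                · rintro a (ha | ha) b (hb | hb) hne
                  · exact h𝒢disj a ha b hb hne
                  · rw [mem_singleton_iff] at hb; subst hb
                    rw [Finset.inter_comm]; exact hdisj a ha
                  · rw [mem_singleton_iff] at ha; subst ha
                    exact hdisj b hb
                  · rw [mem_singleton_iff] at ha hb; subst ha; subst hb; exact absurd rfl hne
              have := h𝒢max.eq_of_subset hmem subset_union_left
              rw [this]; exact Or.inr rfl
            · push_neg at hdisj
              obtain ⟨t, ht, hst⟩ := hdisj
              obtain ⟨y, hy⟩ := hst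
              rw [Finset.mem_inter] at hy
              refine Or.inr (mem_biUnion ?_ ⟨hs, hy.1⟩)
              exact mem_biUnion ht (by exact_mod_cast hy.2)
        exact ((h𝒢c.union (Set.Countable.biUnion hU fun x _ => hpop x)).mono cover)
      · exact ⟨∅, 𝒢, h𝒢sub, h𝒢c, fun s hs t ht hne => h𝒢disj s hs t ht hne⟩

section W
variable {T : Type*} [PartialOrder T]



lemma width_lemma
    (hlin : ∀ t a b : T, a < t → b < t → a ≤ b ∨ b ≤ a)
    (hpred : ∀ t : T, {s : T | s < t}.Countable)
    {A : Set T} (hch : ∀ c ⊆ A, IsChain (· ≤ ·) c → c.Countable) :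
    ∀ n : ℕ, ∀ Z ⊆ A,
      (∀ F : Finset T, ↑F ⊆ Z → (∀ a ∈ F, ∀ b ∈ F, a ≠ b → ¬ a ≤ b ∧ ¬ b ≤ a) → F.card ≤ n) →
      Z.Countable := by
  classical
  intro n
  induction n with
  | zero =>
    intro Z hZA hw
    rcases Set.eq_empty_or_nonempty Z with rfl | ⟨z, hz⟩
    · exact countable_empty
    · exfalso
      have : ({z} : Finset T).card ≤ 0 := hw {z} (by simpa using hz) (by simp)
      simp at this
  | succ n ih =>
    intro Z hZA hw
    by_contra hZc
    -- width-split
    have WS : ∀ x : T, ¬{y | y ∈ Z ∧ x < y}.Countable →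
        ¬{y | y ∈ Z ∧ ¬ x ≤ y ∧ ¬ y ≤ x}.Countable → False := by
      intro x hcone hinc
      apply hcone
      apply ih {y | y ∈ Z ∧ x < y} (fun y hy => hZA hy.1)
      intro F hFsub hFanti
      -- pick an incomparable witness not in F
      have : ¬ ({y | y ∈ Z ∧ ¬ x ≤ y ∧ ¬ y ≤ x} \ ↑F).Countable := by
        intro hc
        exact hinc (by
          have : {y | y ∈ Z ∧ ¬ x ≤ y ∧ ¬ y ≤ x} ⊆ ({y | y ∈ Z ∧ ¬ x ≤ y ∧ ¬ y ≤ x} \ ↑F) ∪ ↑F := by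
            intro y hy; by_cases hyF : y ∈ (F : Set T)
            · exact Or.inr hyF
            · exact Or.inl ⟨hy, hyF⟩
          exact (hc.union F.countable_toSet).mono this)
      have hne : ({y | y ∈ Z ∧ ¬ x ≤ y ∧ ¬ y ≤ x} \ ↑F).Nonempty := by
        rw [Set.nonempty_iff_ne_empty]
        intro h
        rw [h] at this
        exact this countable_empty
      obtain ⟨w, ⟨⟨hwZ, hwx1, hwx2⟩, hwF⟩⟩ := hne
      have hcard := hw (insert w F)
        (by
          intro y hy
          rcases Finset.mem_insert.1 (by exact_mod_cast hy) with rfl | hyF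
          · exact hwZ
          · exact (hFsub (by exact_mod_cast hyF)).1)
        (by
          intro a ha b hb hne
          have key : ∀ b ∈ F, ¬ w ≤ b ∧ ¬ b ≤ w := by
            intro b hbF
            obtain ⟨hbZ, hxb⟩ := hFsub (by exact_mod_cast hbF)
            constructor
            · intro hab
              have hwb : w < b := lt_of_le_of_ne hab (by rintro rfl; exact hwF (by exact_mod_cast hbF))
              rcases hlin b w x hwb hxb with h | h
              · exact hwx2 h
              · exact hwx1 h
            · intro hba
              exact hwx1 (le_of_lt (lt_of_lt_of_le hxb hba))
          rcases Finset.mem_insert.1 ha with ha' | haF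
          · subst ha'
            rcases Finset.mem_insert.1 hb with hb' | hbF
            · subst hb'; exact absurd rfl hne
            · exact key b hbF
          · rcases Finset.mem_insert.1 hb with hb' | hbF
            · subst hb'
              obtain ⟨h1, h2⟩ := key a haF
              exact ⟨h2, h1⟩
            · exact hFanti a haF b hbF hne)
      rw [Finset.card_insert_of_notMem hwF] at hcard
      omega
    -- greedy antichain construction
    have greedy : ∀ W : Set T, W ⊆ Z → ¬W.Countable →
        (∀ z ∈ W, {y | y ∈ W ∧ z < y}.Countable) → False := by
      intro W hWZ hWunc hcones
      have claim : ∀ k : ℕ, ∃ F : Finset T, ↑F ⊆ W ∧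
          (∀ a ∈ F, ∀ b ∈ F, a ≠ b → ¬ a ≤ b ∧ ¬ b ≤ a) ∧ F.card = k := by
        intro k
        induction k with
        | zero => exact ⟨∅, by simp, by simp, rfl⟩
        | succ k ihk =>
          obtain ⟨F, hFW, hFanti, hFcard⟩ := ihk
          set bad : Set T := ⋃ z ∈ (F : Set T), ({y | y ∈ W ∧ z < y} ∪ {y | y ≤ z}) with hbad
          have hbadc : bad.Countable := by
            apply Set.Countable.biUnion (F.countable_toSet)
            intro z hz
            exact ((hcones z (hFW hz)).union
              (((hpred z).union (countable_singleton z)).mono (by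
                intro y hy
                rcases lt_or_eq_of_le hy with h | h
                · exact Or.inl h
                · exact Or.inr (by simpa using h))))
          have : ¬ (W \ bad).Countable := by
            intro hc
            exact hWunc ((hc.union hbadc).mono (fun y hy => by
              by_cases hyb : y ∈ bad
              · exact Or.inr hyb
              · exact Or.inl ⟨hy, hyb⟩))
          have hne : (W \ bad).Nonempty := by
            rw [Set.nonempty_iff_ne_empty]
            intro h
            rw [h] at this
            exact this countable_empty
          obtain ⟨y, hyW, hyb⟩ := hne
          have hyF : y ∉ F := by
            intro hyF
            exact hyb (mem_biUnion (by exact_mod_cast hyF) (Or.inr (le_refl y)))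
          refine ⟨insert y F, ?_, ?_, ?_⟩
          · intro a ha
            rcases Finset.mem_insert.1 (by exact_mod_cast ha) with rfl | haF
            · exact hyW
            · exact hFW (by exact_mod_cast haF)
          · intro a ha b hb hne
            have key : ∀ b ∈ F, ¬ y ≤ b ∧ ¬ b ≤ y := by
              intro b hbF
              constructor
              · intro hyleb
                exact hyb (mem_biUnion (by exact_mod_cast hbF) (Or.inr hyleb))
              · intro hbley
                have : b < y := lt_of_le_of_ne hbley (by rintro rfl; exact hyF hbF)
                exact hyb (mem_biUnion (by exact_mod_cast hbF) (Or.inl ⟨hyW, this⟩))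
            rcases Finset.mem_insert.1 ha with ha' | haF
            · subst ha'
              rcases Finset.mem_insert.1 hb with hb' | hbF
              · subst hb'; exact absurd rfl hne
              · exact key b hbF
            · rcases Finset.mem_insert.1 hb with hb' | hbF
              · subst hb'
                obtain ⟨h1, h2⟩ := key a haF
                exact ⟨h2, h1⟩
              · exact hFanti a haF b hbF hne
          · rw [Finset.card_insert_of_notMem hyF, hFcard]
      obtain ⟨F, hFW, hFanti, hFcard⟩ := claim (n + 2)
      have := hw F (hFW.trans hWZ) hFanti
      omega
    -- Zorn on chains with uncountable strict upper cone in Z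
    set Zc : Set T → Set T := fun c => {y | y ∈ Z ∧ ∀ x ∈ c, x < y} with hZcdef
    set 𝒞 : Set (Set T) := {c | c ⊆ Z ∧ IsChain (· ≤ ·) c ∧ ¬(Zc c).Countable} with h𝒞def
    have hZcZ : ∀ c, Zc c ⊆ Z := fun c y hy => hy.1
    have hZcanti : ∀ c d : Set T, c ⊆ d → Zc d ⊆ Zc c :=
      fun c d hcd y hy => ⟨hy.1, fun x hx => hy.2 x (hcd hx)⟩
    have hempty𝒞 : (∅ : Set T) ∈ 𝒞 := by
      refine ⟨empty_subset _, by simp [IsChain], ?_⟩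
      have : Zc ∅ = Z := by
        ext y; simp [hZcdef]
      rw [this]; exact hZc
    by_cases hUB : ∀ 𝒟 ⊆ 𝒞, IsChain (· ⊆ ·) 𝒟 → 𝒟.Nonempty → ⋃₀ 𝒟 ∈ 𝒞
    · -- Zorn applies
      obtain ⟨m, -, hmmax⟩ := zorn_subset_nonempty 𝒞
        (fun c hc hchain hne => ⟨⋃₀ c, hUB c hc hchain hne, fun s hs => subset_sUnion_of_mem hs⟩)
        ∅ hempty𝒞
      obtain ⟨hmZ, hmchain, hmunc⟩ := hmmax.prop
      by_cases hext : ∃ z ∈ Zc m, ¬{y | y ∈ Zc m ∧ z < y}.Countable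
      · obtain ⟨z, hzZcm, hzunc⟩ := hext
        have hm' : insert z m ∈ 𝒞 := by
          refine ⟨insert_subset (hZcZ m hzZcm) hmZ, ?_, ?_⟩
          · intro a ha b hb hne
            rcases ha with ha' | haM
            · subst ha'
              rcases hb with hb' | hbM
              · exact absurd hb'.symm hne
              · exact Or.inr (le_of_lt (hzZcm.2 b hbM))
            · rcases hb with hb' | hbM
              · subst hb'
                exact Or.inl (le_of_lt (hzZcm.2 a haM))
              · exact hmchain haM hbM hne
          · have : Zc (insert z m) = {y | y ∈ Zc m ∧ z < y} := by
              ext y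
              constructor
              · rintro ⟨hyZ, hall⟩
                exact ⟨⟨hyZ, fun x hx => hall x (Or.inr hx)⟩, hall z (Or.inl rfl)⟩
              · rintro ⟨⟨hyZ, hall⟩, hzy⟩
                refine ⟨hyZ, ?_⟩
                rintro x (hx' | hxM)
                · subst hx'; exact hzy
                · exact hall x hxM
            rw [this]; exact hzunc
        have heq := hmmax.eq_of_subset hm' (subset_insert z m)
        have hzm : z ∈ m := by rw [heq]; exact Or.inl rfl
        exact absurd (hzZcm.2 z hzm) (lt_irrefl z)
      · push_neg at hext
        exact greedy (Zc m) (hZcZ m) hmunc hext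
    · push_neg at hUB
      obtain ⟨𝒟, h𝒟sub, h𝒟chain, h𝒟ne, h𝒟bad⟩ := hUB
      set cs : Set T := ⋃₀ 𝒟 with hcs
      have hcsZ : cs ⊆ Z := sUnion_subset fun s hs => (h𝒟sub hs).1
      have hcschain : IsChain (· ≤ ·) cs := by
        rintro a ⟨s, hs, has⟩ b ⟨t, ht, hbt⟩ hne
        rcases h𝒟chain.total hs ht with h | h
        · exact (h𝒟sub ht).2.1 (h has) hbt hne
        · exact (h𝒟sub hs).2.1 has (h hbt) hne
      have hcsc : cs.Countable := hch cs (hcsZ.trans hZA) hcschain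
      have hZccsc : (Zc cs).Countable := by
        by_contra hh
        exact h𝒟bad ⟨hcsZ, hcschain, hh⟩
      rcases Set.eq_empty_or_nonempty cs with hcse | hcsne
      · have : Zc cs = Z := by
          ext y; simp [hZcdef, hcse]
        rw [this] at hZccsc
        exact hZc hZccsc
      obtain ⟨e, he⟩ := hcsc.exists_eq_range hcsne
      have hdex : ∀ k : ℕ, ∃ s, s ∈ 𝒟 ∧ e k ∈ s := by
        intro k
        have : e k ∈ cs := by rw [he]; exact mem_range_self k
        obtain ⟨s, hs, hes⟩ := this
        exact ⟨s, hs, hes⟩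
      choose d hd1 hd2 using hdex
      have hstep : ∀ (s : {s // s ∈ 𝒟}) (k : ℕ), ∃ t : {s // s ∈ 𝒟}, s.1 ⊆ t.1 ∧ d k ⊆ t.1 := by
        intro s k
        rcases h𝒟chain.total (hd1 k) s.2 with h | h
        · exact ⟨s, subset_rfl, h⟩
        · exact ⟨⟨d k, hd1 k⟩, h, subset_rfl⟩
      choose st hst1 hst2 using hstep
      set c : ℕ → {s // s ∈ 𝒟} :=
        fun k => Nat.rec ⟨d 0, hd1 0⟩ (fun j prev => st prev (j + 1)) k with hc
      have hc0 : (c 0).1 = d 0 := rfl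
      have hcsucc : ∀ k, c (k + 1) = st (c k) (k + 1) := fun k => rfl
      have hcmono : ∀ k, (c k).1 ⊆ (c (k + 1)).1 := by
        intro k; rw [hcsucc k]; exact hst1 _ _
      have hdck : ∀ k, d k ⊆ (c k).1 := by
        intro k
        cases k with
        | zero => rw [hc0]
        | succ j => rw [hcsucc j]; exact hst2 _ _
      set Y : ℕ → Set T := fun k => Zc (c k).1 with hY
      have hY0 : ¬(Y 0).Countable := ((h𝒟sub (c 0).2)).2.2
      have hYmono : ∀ k, Y (k + 1) ⊆ Y k := fun k => hZcanti _ _ (hcmono k)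
      have hYint : (⋂ k, Y k) ⊆ Zc cs := by
        intro y hy
        have hyZ : y ∈ Z := (mem_iInter.1 hy 0).1
        refine ⟨hyZ, ?_⟩
        intro x hx
        have : x ∈ range e := by rw [← he]; exact hx
        obtain ⟨k, rfl⟩ := this
        exact (mem_iInter.1 hy k).2 (e k) (hdck k (hd2 k))
      have hIc : (⋂ k, Y k).Countable := hZccsc.mono hYint
      have hBad : ¬(Y 0 \ ⋂ k, Y k).Countable := by
        intro hc'
        apply hY0
        exact (hc'.union hIc).mono (fun y hy => by
          by_cases h : y ∈ ⋂ k, Y k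
          · exact Or.inr h
          · exact Or.inl ⟨hy, h⟩)
      have hBadsub : (Y 0 \ ⋂ k, Y k) ⊆ ⋃ k, (Y k \ Y (k + 1)) := by
        rintro y ⟨hy0, hynot⟩
        by_contra hcon
        simp only [mem_iUnion, not_exists, mem_diff, not_and, not_not] at hcon
        apply hynot
        rw [mem_iInter]
        intro k
        induction k with
        | zero => exact hy0
        | succ j ihj => exact hcon j ihj
      obtain ⟨k0, hk0⟩ : ∃ k, ¬(Y k \ Y (k + 1)).Countable := by
        by_contra hcon
        push_neg at hcon
        exact hBad ((countable_iUnion hcon).mono hBadsub)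
      have hWsub : (Y k0 \ Y (k0 + 1)) ⊆
          ⋃ x ∈ (c (k0 + 1)).1, {y | y ∈ Y k0 \ Y (k0 + 1) ∧ ¬ x < y} := by
        rintro y ⟨hyk, hynk⟩
        have hyZ : y ∈ Z := hyk.1
        have : ¬ ∀ x ∈ (c (k0 + 1)).1, x < y := fun hall => hynk ⟨hyZ, hall⟩
        push_neg at this
        obtain ⟨x, hx, hxy⟩ := this
        exact mem_biUnion hx ⟨⟨hyk, hynk⟩, hxy⟩
      have hck0c : ((c (k0 + 1)).1 : Set T).Countable :=
        hch _ (((h𝒟sub (c (k0 + 1)).2).1).trans hZA) ((h𝒟sub (c (k0 + 1)).2).2.1)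
      obtain ⟨x0, hx0mem, hx0unc⟩ : ∃ x ∈ (c (k0 + 1)).1,
          ¬{y | y ∈ Y k0 \ Y (k0 + 1) ∧ ¬ x < y}.Countable := by
        by_contra hcon
        push_neg at hcon
        exact hk0 ((Set.Countable.biUnion hck0c hcon).mono hWsub)
      apply WS x0
      · intro hcone
        apply (h𝒟sub (c (k0 + 1)).2).2.2
        apply hcone.mono
        intro y hy
        exact ⟨hy.1, hy.2 x0 hx0mem⟩
      · intro hincc
        apply hx0unc
        apply ((hincc.union ((hpred x0).union (countable_singleton x0))).mono)
        rintro y ⟨⟨hyk, hynk⟩, hnxy⟩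
        by_cases hyx : y ≤ x0
        · rcases lt_or_eq_of_le hyx with h | h
          · exact Or.inr (Or.inl h)
          · exact Or.inr (Or.inr (by simpa using h))
        · refine Or.inl ⟨hyk.1, ?_, hyx⟩
          intro hxy
          rcases lt_or_eq_of_le hxy with h | h
          · exact hnxy h
          · exact hyx (le_of_eq h.symm)



end W


noncomputable def iwE : Tw1.Iw1 ≃ ↥(Set.Iio (Cardinal.aleph.{0} 1).ord) := Equiv.refl _

lemma iwE_lt_iff {a b : Tw1.Iw1} : a < b ↔ (iwE a).1 < (iwE b).1 := by
  constructor
  · intro h; exact h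
  · intro h; exact h

lemma iwE_le_iff {a b : Tw1.Iw1} : a ≤ b ↔ (iwE a).1 ≤ (iwE b).1 := by
  constructor
  · intro h; exact h
  · intro h; exact h

lemma ctble_Iio_ord {β : Ordinal.{0}} (hβ : β < (Cardinal.aleph.{0} 1).ord) :
    Countable (↥(Set.Iio β)) := by
  rw [← Cardinal.mk_le_aleph0_iff, Ordinal.mk_Iio_ordinal]
  have h1 : β.card < Cardinal.aleph 1 := (Cardinal.lt_ord).1 hβ
  have h2 : β.card ≤ Cardinal.aleph0 := by
    rwa [← Cardinal.succ_aleph0, Order.lt_succ_iff] at h1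
  calc Cardinal.lift.{1} β.card ≤ Cardinal.lift.{1} Cardinal.aleph0 := Cardinal.lift_le.2 h2
    _ = Cardinal.aleph0 := Cardinal.lift_aleph0

lemma ctble_Iic_Iw1 (k : Tw1.Iw1) : (Set.Iic k).Countable := by
  rw [← Set.countable_coe_iff]
  have hk : (iwE k).1 < (Cardinal.aleph.{0} 1).ord := (iwE k).2
  have hsucc : (iwE k).1 + 1 < (Cardinal.aleph.{0} 1).ord := by
    rw [Ordinal.add_one_eq_succ]
    exact (Order.IsSuccLimit.succ_lt_iff (Cardinal.isSuccLimit_ord (Cardinal.aleph0_le_aleph 1))).2 hk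
  haveI := ctble_Iio_ord hsucc
  refine Function.Injective.countable
    (f := fun (j : ↥(Set.Iic k)) => (⟨(iwE j.1).1, ?_⟩ : ↥(Set.Iio ((iwE k).1 + 1)))) ?_
  · have : (iwE j.1).1 ≤ (iwE k).1 := iwE_le_iff.1 j.2
    show (iwE j.1).1 < (iwE k).1 + 1
    rw [Ordinal.add_one_eq_succ, Order.lt_succ_iff]
    exact this
  · intro a b hab
    simp only [Subtype.mk.injEq] at hab
    have : iwE a.1 = iwE b.1 := Subtype.ext hab
    have : a.1 = b.1 := iwE.injective this
    exact Subtype.ext this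

lemma Iw1_uncountable : ¬ Countable Tw1.Iw1 := by
  intro h
  have hmk : Cardinal.mk Tw1.Iw1 = Cardinal.lift.{1} ((Cardinal.aleph.{0} 1).ord).card :=
    (Cardinal.mk_congr iwE).trans (Ordinal.mk_Iio_ordinal _)
  rw [Cardinal.card_ord] at hmk
  have := Cardinal.mk_le_aleph0_iff.2 h
  rw [hmk] at this
  rw [← Cardinal.lift_aleph0.{1,0}, Cardinal.lift_le] at this
  exact (Cardinal.aleph0_lt_aleph_one).not_ge this

universe u

lemma branch_chain_countable {T : Type u} [PartialOrder T]
    (htree : Tw1.IsTree T)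
    (Bf : Tw1.Iw1 → Set T)
    (hall : ∀ B : Set T, Tw1.IsOmega1Branch B → ∃ i, Bf i = B)
    (x : Tw1.Iw1 → T)
    (hx : ∀ j, x j ∈ Tw1.Bseg Bf j) :
    ∀ c ⊆ Set.range x, IsChain (· ≤ ·) c → c.Countable := by
  intro c hcx hchain
  by_contra hcc
  obtain ⟨M, hMmax, hcM⟩ := hchain.exists_maxChain
  have hMunc : ¬ M.Countable := fun h => hcc (h.mono hcM)
  -- downward closure
  have hMdc : ∀ t ∈ M, ∀ s : T, s < t → s ∈ M := by
    intro t ht s hst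
    have hchain' : IsChain (· ≤ ·) (insert s M) := by
      intro a ha b hb hne
      rcases ha with ha' | haM
      · subst ha'
        rcases hb with hb' | hbM
        · exact absurd hb'.symm hne
        · -- a = s, b ∈ M
          rcases eq_or_ne b t with rfl | hbt
          · exact Or.inl (le_of_lt hst)
          · rcases hMmax.1 hbM ht hbt with h | h
            · rcases lt_or_eq_of_le h with h' | h'
              · exact (htree t).1 a b hst h'
              · exact absurd h' hbt
            · exact Or.inl (le_of_lt (lt_of_lt_of_le hst h))
      · rcases hb with hb' | hbM
        · subst hb'
          rcases eq_or_ne a t with rfl | hat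
          · exact Or.inr (le_of_lt hst)
          · rcases hMmax.1 haM ht hat with h | h
            · rcases lt_or_eq_of_le h with h' | h'
              · rcases (htree t).1 a b h' hst with hc1 | hc1
                · exact Or.inl hc1
                · exact Or.inr hc1
              · exact absurd h' hat
            · exact Or.inr (le_of_lt (lt_of_lt_of_le hst h))
        · exact hMmax.1 haM hbM hne
    have := hMmax.2 hchain' (subset_insert s M)
    rw [this]
    exact Or.inl rfl
  -- least element property
  have hMmin : ∀ Sm : Set T, Sm ⊆ M → Sm.Nonempty → ∃ a ∈ Sm, ∀ b ∈ Sm, a ≤ b := by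
    intro Sm hSmM ⟨t, ht⟩
    by_cases hlt : ∃ s ∈ Sm, s < t
    · obtain ⟨m0, hm0mem, hm0min⟩ := (htree t).2.2 {s | s ∈ Sm ∧ s < t}
        (fun s hs => hs.2) (by obtain ⟨s, hs⟩ := hlt; exact ⟨s, hs⟩)
      refine ⟨m0, hm0mem.1, ?_⟩
      intro b hb
      by_cases hbt : b < t
      · exact hm0min b ⟨hb, hbt⟩
      · -- b not < t, b and t both in M: t ≤ b
        have htb : t ≤ b := by
          rcases eq_or_ne b t with rfl | hbt'
          · exact le_refl b
          · rcases hMmax.1 (hSmM hb) (hSmM ht) hbt' with h | h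
            · exact absurd (lt_of_le_of_ne h hbt') hbt
            · exact h
        exact le_trans (le_of_lt hm0mem.2) htb
    · push_neg at hlt
      refine ⟨t, ht, ?_⟩
      intro b hb
      rcases eq_or_ne b t with rfl | hbt'
      · exact le_refl b
      · rcases hMmax.1 (hSmM hb) (hSmM ht) hbt' with h | h
        · exact absurd (lt_of_le_of_ne h hbt') (hlt b hb)
        · exact h
  -- well order on ↥M
  haveI htri : IsTrichotomous ↥M (· < ·) := by
    constructor
    intro a b
    rcases eq_or_ne a b with rfl | hne
    · exact fun _ _ => rfl
    · have hne' : (a : T) ≠ (b : T) := fun h => hne (Subtype.ext h)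
      rcases hMmax.1 a.2 b.2 hne' with h | h
      · exact fun h1 _ => absurd (Subtype.coe_lt_coe.1 (lt_of_le_of_ne h hne')) h1
      · exact fun _ h2 => absurd (Subtype.coe_lt_coe.1 (lt_of_le_of_ne h (Ne.symm hne'))) h2
  haveI htrans : IsTrans ↥M (· < ·) := ⟨fun a b c hab hbc => lt_trans hab hbc⟩
  haveI hwf : IsWellFounded ↥M (· < ·) := by
    constructor
    rw [WellFounded.wellFounded_iff_has_min]
    intro s hs
    obtain ⟨a, has, hamin⟩ := hMmin (Subtype.val '' s)
      (by rintro y ⟨ys, hys, rfl⟩; exact ys.2) (hs.image _)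
    obtain ⟨aa, haas, haav⟩ := has
    refine ⟨aa, haas, ?_⟩
    intro y hys hlt
    have : (a : T) ≤ y := hamin y ⟨y, hys, rfl⟩
    rw [← haav] at this
    exact absurd (lt_of_lt_of_le (Subtype.coe_lt_coe.2 hlt) this) (lt_irrefl _)
  haveI hwoM : IsWellOrder ↥M (· < ·) := ⟨⟩
  haveI hwoI : IsWellOrder Tw1.Iw1 (· < ·) := by
    have e : ((· < ·) : Tw1.Iw1 → Tw1.Iw1 → Prop) ↪r ((· < ·) : Ordinal.{0} → Ordinal.{0} → Prop) := by
      refine ⟨⟨fun a => (iwE a).1, ?_⟩, ?_⟩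
      · intro a b hab
        exact iwE.injective (Subtype.ext hab)
      · intro a b
        exact iwE_lt_iff.symm
    exact e.isWellOrder
  -- lift both to a common universe
  set MU := ULift.{1} ↥M with hMU
  set IU := ULift.{u} Tw1.Iw1 with hIU
  set rM : MU → MU → Prop := fun a b => a.down < b.down with hrM
  set rI : IU → IU → Prop := fun a b => a.down < b.down with hrI
  have eM : rM ↪r ((· < ·) : ↥M → ↥M → Prop) :=
    ⟨⟨fun a => a.down, fun a b hab => by cases a; cases b; simp_all⟩, Iff.rfl⟩
  have eI : rI ↪r ((· < ·) : Tw1.Iw1 → Tw1.Iw1 → Prop) :=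
    ⟨⟨fun a => a.down, fun a b hab => by cases a; cases b; simp_all⟩, Iff.rfl⟩
  haveI : IsWellOrder MU rM := eM.isWellOrder
  haveI : IsWellOrder IU rI := eI.isWellOrder
  rcases lt_trichotomy (Ordinal.type rM) (Ordinal.type rI) with hlt | heq | hgt
  · -- M embeds as a proper initial segment of ω₁ : M would be countable
    obtain ⟨b, hb⟩ := Ordinal.typein_surj rI hlt
    have : Nonempty (Subrel rI (rI · b) ≃r rM) := by
      apply Ordinal.type_eq.1
      rw [Ordinal.type_subrel, hb]
    obtain ⟨f⟩ := this
    have hcsub : Countable (↥{b' : IU | rI b' b}) := by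
      have : Countable ↥(Set.Iic b.down) := Set.countable_coe_iff.2 (ctble_Iic_Iw1 b.down)
      refine Function.Injective.countable
        (f := fun (j : ↥{b' : IU | rI b' b}) =>
          (⟨j.1.down, Set.mem_Iic.2 (le_of_lt j.2)⟩ : ↥(Set.Iic b.down))) ?_
      intro u v huv
      have h1 := congrArg Subtype.val huv
      exact Subtype.ext (ULift.down_injective (by exact h1))
    haveI : Countable (Subtype (rI · b)) := hcsub
    haveI : Countable MU := Countable.of_equiv _ f.toEquiv
    haveI : Countable ↥M := Countable.of_equiv _ Equiv.ulift
    exact hMunc (Set.countable_coe_iff.1 ‹Countable ↥M›)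
  · -- equal types: construct the order isomorphism, M is an ω₁-branch
    obtain ⟨f⟩ := Ordinal.type_eq.1 heq
    -- f : rM ≃r rI
    have g : ((· < ·) : Tw1.Iw1 → Tw1.Iw1 → Prop) ≃r ((· < ·) : ↥M → ↥M → Prop) := by
      refine ⟨(Equiv.ulift.symm.trans f.symm.toEquiv).trans Equiv.ulift, ?_⟩
      intro a b
      exact ⟨fun h => f.symm.map_rel_iff.1 h, fun h => f.symm.map_rel_iff.2 h⟩
    have hiso : Nonempty (Tw1.Iw1 ≃o ↥M) := ⟨OrderIso.ofRelIsoLT g⟩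
    obtain ⟨k, hk⟩ := hall M ⟨hMmax, hiso⟩
    -- every element of c has index ≤ k
    have hsub : c ⊆ x '' (Set.Iic k) := by
      intro a ha
      obtain ⟨j, rfl⟩ := hcx ha
      refine ⟨j, ?_, rfl⟩
      by_contra hjk
      have hkj : k < j := lt_of_not_ge hjk
      have := (hx j).2
      rw [Set.mem_iUnion] at this
      exact this ⟨k, by rw [Set.mem_iUnion]; exact ⟨hkj, by rw [hk]; exact hcM ha⟩⟩
    exact hcc (((ctble_Iic_Iw1 k).image x).mono hsub)
  · -- ω₁ embeds below an element of M: contradiction with countable predecessors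
    obtain ⟨a, ha⟩ := Ordinal.typein_surj rM hgt
    have : Nonempty (Subrel rM (rM · a) ≃r rI) := by
      apply Ordinal.type_eq.1
      rw [Ordinal.type_subrel, ha]
    obtain ⟨f⟩ := this
    have hcsub : Countable (↥{a' : MU | rM a' a}) := by
      have hc : Countable ↥{s : T | s < (a.down : T)} :=
        Set.countable_coe_iff.2 ((htree (a.down : T)).2.1)
      refine Function.Injective.countable
        (f := fun (j : ↥{a' : MU | rM a' a}) =>
          (⟨(j.1.down : T), show (j.1.down : T) < (a.down : T) from Subtype.coe_lt_coe.2 j.2⟩ : ↥{s : T | s < (a.down : T)})) ?_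
      intro u v huv
      have h1 := congrArg Subtype.val huv
      exact Subtype.ext (ULift.down_injective (Subtype.ext (by exact h1)))
    haveI : Countable (Subtype (rM · a)) := hcsub
    haveI : Countable IU := Countable.of_equiv _ f.toEquiv
    haveI : Countable Tw1.Iw1 := Countable.of_equiv _ Equiv.ulift
    exact Iw1_uncountable ‹Countable Tw1.Iw1›



lemma orElse_ne_none {a b : Option ℕ} : (a.orElse fun _ => b) ≠ none ↔ (a ≠ none ∨ b ≠ none) := by
  cases a <;> cases b <;> simp

lemma reasons {T : Type*} [PartialOrder T] {A : Set T} {f g : T → Option ℕ}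
    (hf : f ∈ Tw1.Pcond A) (hg : g ∈ Tw1.Pcond A) (hnc : ¬ Tw1.Compat A f g) :
    (∃ t, f t ≠ none ∧ g t ≠ none ∧ f t ≠ g t) ∨
    (∃ u v, u < v ∧ f u ≠ none ∧ g u = none ∧ g v ≠ none ∧ f v = none) ∨
    (∃ u v, u < v ∧ g u ≠ none ∧ f u = none ∧ f v ≠ none ∧ g v = none) := by
  by_cases hagree : ∀ t, f t ≠ none → g t ≠ none → f t = g t
  · right
    set h : T → Option ℕ := fun t => (f t).orElse (fun _ => g t) with hh
    have hhne : ∀ t, h t ≠ none ↔ (f t ≠ none ∨ g t ≠ none) := fun t => orElse_ne_none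
    have hhf : ∀ t, f t ≠ none → h t = f t := by
      intro t ht
      simp only [hh]
      cases hft : f t
      · exact absurd hft ht
      · simp
    have hhg : ∀ t, f t = none → h t = g t := by
      intro t ht
      simp only [hh, ht]
      simp
    have hmem : ¬ (h ∈ Tw1.Pcond A) := fun hmem => hnc ⟨hagree, hmem⟩
    have hfin : {t | h t ≠ none}.Finite := by
      have : {t | h t ≠ none} ⊆ {t | f t ≠ none} ∪ {t | g t ≠ none} := by
        intro t ht
        rcases (hhne t).1 ht with h1 | h1
        · exact Or.inl h1
        · exact Or.inr h1
      exact (hf.1.union hg.1).subset this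
    have hsub : {t | h t ≠ none} ⊆ A := by
      intro t ht
      rcases (hhne t).1 ht with h1 | h1
      · exact hf.2.1 h1
      · exact hg.2.1 h1
    have : ¬ (∀ u v : T, u < v → h u ≠ none → h v ≠ none → h u ≠ h v) := by
      intro hinj
      exact hmem ⟨hfin, hsub, hinj⟩
    push_neg at this
    obtain ⟨u, v, huv, hu, hv, heq⟩ := this
    by_cases hfu : f u ≠ none
    · by_cases hfv : f v ≠ none
      · exact absurd heq (by rw [hhf u hfu, hhf v hfv]; exact hf.2.2 u v huv hfu hfv)
      · push_neg at hfv
        have hgv : g v ≠ none := by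
          rcases (hhne v).1 hv with h1 | h1
          · exact absurd hfv h1
          · exact h1
        by_cases hgu : g u ≠ none
        · exfalso
          have h1 : f u = g u := hagree u hfu hgu
          have h2 : h u = f u := hhf u hfu
          have h3 : h v = g v := hhg v hfv
          exact hg.2.2 u v huv hgu hgv (by rw [← h1, ← h2, ← h3]; exact heq)
        · push_neg at hgu
          exact Or.inl ⟨u, v, huv, hfu, hgu, hgv, hfv⟩
    · push_neg at hfu
      have hgu : g u ≠ none := by
        rcases (hhne u).1 hu with h1 | h1
        · exact absurd hfu h1
        · exact h1
      by_cases hfv : f v ≠ none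
      · by_cases hgv : g v ≠ none
        · exfalso
          have h1 : f v = g v := hagree v hfv hgv
          have h2 : h u = g u := hhg u hfu
          have h3 : h v = f v := hhf v hfv
          exact hg.2.2 u v huv hgu hgv (by rw [← h1, ← h2, ← h3]; exact heq)
        · push_neg at hgv
          exact Or.inr ⟨u, v, huv, hgu, hfu, hfv, hgv⟩
      · push_neg at hfv
        have hgv : g v ≠ none := by
          rcases (hhne v).1 hv with h1 | h1
          · exact absurd hfv h1
          · exact h1
        exfalso
        have h2 : h u = g u := hhg u hfu
        have h3 : h v = g v := hhg v hfv
        exact hg.2.2 u v huv hgu hgv (by rw [← h2, ← h3]; exact heq)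
  · left
    push_neg at hagree
    obtain ⟨t, h1, h2, h3⟩ := hagree
    exact ⟨t, h1, h2, h3⟩


lemma ultra_of_uncountable {σ : Type*} (hunc : ¬ (Set.univ : Set σ).Countable) :
    ∃ 𝒰 : Ultrafilter σ, ∀ s : Set σ, s.Countable → s ∉ 𝒰 := by
  set F := Filter.cocardinal (α := σ) Cardinal.isRegular_aleph_one with hF
  haveI : F.NeBot := by
    rw [Filter.neBot_iff]
    intro hbot
    have : (∅ : Set σ) ∈ F := by rw [hbot]; exact Filter.mem_bot
    rw [Filter.mem_cocardinal] at this
    rw [Set.compl_empty] at this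
    exact hunc ((Cardinal.countable_iff_lt_aleph_one _).2 this)
  obtain ⟨𝒰, h𝒰⟩ := Ultrafilter.exists_le F
  refine ⟨𝒰, ?_⟩
  intro s hs
  have hcompl : sᶜ ∈ F :=
    Filter.compl_mem_cocardinal_of_card_lt ((Cardinal.countable_iff_lt_aleph_one _).1 hs)
  have : sᶜ ∈ 𝒰 := h𝒰 hcompl
  exact (Ultrafilter.compl_mem_iff_notMem).1 this

lemma ultra_finset_biUnion {σ ι : Type*} (𝒰 : Ultrafilter σ) (s : Finset ι) (W : ι → Set σ)
    (h : (⋃ i ∈ s, W i) ∈ 𝒰) : ∃ i ∈ s, W i ∈ 𝒰 := by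
  classical
  induction s using Finset.induction with
  | empty =>
    exfalso
    simp only [Finset.notMem_empty, Set.iUnion_of_empty, Set.iUnion_empty] at h
    exact Ultrafilter.empty_notMem h
  | insert a t hni ih =>
    rw [Finset.set_biUnion_insert] at h
    rcases (Ultrafilter.union_mem_iff).1 h with h1 | h1
    · exact ⟨a, Finset.mem_insert_self a t, h1⟩
    · obtain ⟨i, hi, hWi⟩ := ih h1
      exact ⟨i, Finset.mem_insert_of_mem hi, hWi⟩

end Aux


/-- (ccc of the sealing forcing.)  With `x_j = min B'_j` and `A = {x_j : j < ω₁}`,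
the partial order `P'_T` of finite partial functions `f : A → ω` with
`f(x) ≠ f(y)` for comparable `x < y` in the domain satisfies the countable
chain condition: every pairwise incompatible set of conditions is countable. -/
theorem stmt15 {T : Type*} [PartialOrder T]
    (htree : Tw1.IsTree T)
    (hcover : ∀ t : T, ∃ B : Set T, Tw1.IsOmega1Branch B ∧ t ∈ B)
    (Bf : Tw1.Iw1 → Set T)
    (hbr : ∀ i, Tw1.IsOmega1Branch (Bf i))
    (hinj : Function.Injective Bf)
    (hall : ∀ B : Set T, Tw1.IsOmega1Branch B → ∃ i, Bf i = B)
    (x : Tw1.Iw1 → T)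
    (hx : ∀ j, x j ∈ Tw1.Bseg Bf j ∧ ∀ y ∈ Tw1.Bseg Bf j, x j ≤ y) :
    ∀ S : Set (T → Option ℕ), S ⊆ Tw1.Pcond (Set.range x) →
      (∀ f ∈ S, ∀ g ∈ S, f ≠ g → ¬ Tw1.Compat (Set.range x) f g) →
      S.Countable := by
  classical
  intro S hS hinc
  by_contra hSc
  set A := Set.range x with hA
  have hlin : ∀ t a b : T, a < t → b < t → a ≤ b ∨ b ≤ a := fun t => (htree t).1
  have hpredc : ∀ t : T, {s : T | s < t}.Countable := fun t => (htree t).2.1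
  have hchains : ∀ c ⊆ A, IsChain (· ≤ ·) c → c.Countable :=
    branch_chain_countable htree Bf hall x (fun j => (hx j).1)
  set dom : (T → Option ℕ) → Set T := fun f => {t | f t ≠ none} with hdom
  have hdomfin : ∀ f ∈ S, (dom f).Finite := fun f hf => (hS hf).1
  have hdomsub : ∀ f ∈ S, dom f ⊆ A := fun f hf => (hS hf).2.1
  -- Step 1: constant domain size
  obtain ⟨N, hN⟩ := uncountable_fiber (fun f => (dom f).ncard) S hSc
  set S1 : Set (T → Option ℕ) := {f | f ∈ S ∧ (dom f).ncard = N} with hS1def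
  have hS1S : S1 ⊆ S := fun f hf => hf.1
  have hS1unc : ¬ S1.Countable := hN
  -- helper: sets injectively mapped into countable types are countable
  have cinjOn : ∀ {α β : Type _} [Countable β] (g : α → β) (s : Set α),
      Set.InjOn g s → s.Countable := by
    intro α β _ g s hinj
    rw [← Set.countable_coe_iff]
    exact Function.Injective.countable (f := fun a : ↥s => g a.1)
      (fun a b hab => Subtype.ext (hinj a.2 b.2 hab))
  -- Step 2: uncountably many distinct domains
  have hfibdom : ∀ d : Finset T, {f | f ∈ S1 ∧ dom f = ↑d}.Countable := by
    intro d
    haveI := d.finite_toSet.to_subtype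
    apply cinjOn (fun f => (fun t : ↥(↑d : Set T) => f t.1))
    intro f1 hf1 f2 hf2 h12
    funext t
    by_cases htd : t ∈ (↑d : Set T)
    · exact congrFun h12 ⟨t, htd⟩
    · have h1 : f1 t = none := by
        by_contra hc; exact htd (hf1.2 ▸ hc)
      have h2 : f2 t = none := by
        by_contra hc; exact htd (hf2.2 ▸ hc)
      rw [h1, h2]
  set doms : Set (Finset T) := {d | ∃ f, f ∈ S1 ∧ dom f = ↑d} with hdoms
  have hdomsunc : ¬ doms.Countable := by
    intro hc
    apply hS1unc
    have hcover : S1 ⊆ ⋃ d ∈ doms, {f | f ∈ S1 ∧ dom f = ↑d} := by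
      intro f hf
      have hfin := hdomfin f (hS1S hf)
      refine Set.mem_biUnion (show hfin.toFinset ∈ doms from ⟨f, hf, by
        rw [Set.Finite.coe_toFinset]⟩) ⟨hf, by rw [Set.Finite.coe_toFinset]⟩
    exact (Set.Countable.biUnion hc (fun d _ => hfibdom d)).mono hcover
  have hdomscard : ∀ d ∈ doms, d.card ≤ N := by
    rintro d ⟨f, hf, hfd⟩
    have : (↑d : Set T).ncard = N := by rw [← hfd]; exact hf.2
    rw [Set.ncard_coe_finset] at this
    omega
  obtain ⟨R, ℬ, hℬsub, hℬunc, hℬdelta⟩ := delta_system N doms hdomscard hdomsunc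
  -- Step 3: select one condition per domain
  have hsel : ∀ d : ↥ℬ, ∃ f, f ∈ S1 ∧ dom f = ↑d.1 := fun d => hℬsub d.2
  choose ψ hψ1 hψ2 using hsel
  set S2 : Set (T → Option ℕ) := Set.range ψ with hS2def
  have hS2S1 : S2 ⊆ S1 := by rintro f ⟨d, rfl⟩; exact hψ1 d
  have hS2unc : ¬ S2.Countable := by
    intro hc
    apply hℬunc
    have hcov : ℬ ⊆ (fun d : Finset T => (↑d : Set T)) ⁻¹' (dom '' S2) := by
      intro d hd
      exact ⟨ψ ⟨d, hd⟩, ⟨⟨d, hd⟩, rfl⟩, (hψ2 ⟨d, hd⟩).symm ▸ rfl⟩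
    exact (((hc.image dom).preimage Finset.coe_injective)).mono hcov
  have hS2root : ∀ f ∈ S2, ∀ g ∈ S2, f ≠ g → dom f ∩ dom g = ↑R := by
    rintro f ⟨d, rfl⟩ g ⟨d', rfl⟩ hne
    have hdd' : d.1 ≠ d'.1 := by
      intro h; exact hne (congrArg ψ (Subtype.ext h))
    rw [hψ2 d, hψ2 d', ← Finset.coe_inter, hℬdelta d.1 d.2 d'.1 d'.2 hdd']
  -- Step 4: same values on the root
  haveI := R.finite_toSet.to_subtype
  obtain ⟨v0, hv0⟩ := uncountable_fiber (fun f => (fun t : ↥(↑R : Set T) => f t.1)) S2 hS2unc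
  set S3 : Set (T → Option ℕ) := {f | f ∈ S2 ∧ (fun t : ↥(↑R : Set T) => f t.1) = v0}
    with hS3def
  have hS3S2 : S3 ⊆ S2 := fun f hf => hf.1
  have hS3unc : ¬ S3.Countable := hv0
  have hagreeR : ∀ f ∈ S3, ∀ g ∈ S3, ∀ t ∈ (↑R : Set T), f t = g t := by
    intro f hf g hg t ht
    have h1 := congrFun hf.2 ⟨t, ht⟩
    have h2 := congrFun hg.2 ⟨t, ht⟩
    rw [h1, h2]
  have hex2 : ∀ f ∈ S3, ∃ g ∈ S3, g ≠ f := by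
    intro f hf
    by_contra hcon
    push_neg at hcon
    exact hS3unc ((Set.countable_singleton f).mono (fun g hg => hcon g hg))
  have hRsub : ∀ f ∈ S3, (↑R : Set T) ⊆ dom f := by
    intro f hf
    obtain ⟨g, hg, hgf⟩ := hex2 f hf
    rw [← hS2root f (hS3S2 hf) g (hS3S2 hg) (Ne.symm hgf)]
    exact Set.inter_subset_left
  set E : (T → Option ℕ) → Set T := fun f => dom f \ ↑R with hE
  have hEdisj : ∀ f ∈ S3, ∀ g ∈ S3, f ≠ g → E f ∩ E g = ∅ := by
    intro f hf g hg hne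
    rw [Set.eq_empty_iff_forall_notMem]
    rintro t ⟨⟨ht1, ht2⟩, ⟨ht3, _⟩⟩
    exact ht2 ((hS2root f (hS3S2 hf) g (hS3S2 hg) hne) ▸ (Set.mem_inter ht1 ht3))
  -- Step 5: discard the at most one condition with empty E
  set S4 : Set (T → Option ℕ) := {f | f ∈ S3 ∧ (E f).Nonempty} with hS4def
  have hS4S3 : S4 ⊆ S3 := fun f hf => hf.1
  have hS4unc : ¬ S4.Countable := by
    intro hc
    apply hS3unc
    have hsing : {f | f ∈ S3 ∧ E f = ∅}.Subsingleton := by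
      intro f hf g hg
      by_contra hne
      have hdf : dom f = ↑R := Set.Subset.antisymm
        (by intro t ht; by_contra htR; exact (Set.eq_empty_iff_forall_notMem.1 hf.2 t) ⟨ht, htR⟩)
        (hRsub f hf.1)
      have hdg : dom g = ↑R := Set.Subset.antisymm
        (by intro t ht; by_contra htR; exact (Set.eq_empty_iff_forall_notMem.1 hg.2 t) ⟨ht, htR⟩)
        (hRsub g hg.1)
      apply hne
      funext t
      by_cases htR : t ∈ (↑R : Set T)
      · exact hagreeR f hf.1 g hg.1 t htR
      · have h1 : f t = none := by
          by_contra hcc; exact htR (hdf ▸ hcc)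
        have h2 : g t = none := by
          by_contra hcc; exact htR (hdg ▸ hcc)
        rw [h1, h2]
    have : S3 ⊆ S4 ∪ {f | f ∈ S3 ∧ E f = ∅} := by
      intro f hf
      rcases Set.eq_empty_or_nonempty (E f) with he | he
      · exact Or.inr ⟨hf, he⟩
      · exact Or.inl ⟨hf, he⟩
    exact (hc.union hsing.countable).mono this
  have hS4S : S4 ⊆ S := fun f hf => hS1S (hS2S1 (hS3S2 (hS4S3 hf)))
  -- Step 6: ultrafilter argument
  have hσunc : ¬ (Set.univ : Set ↥S4).Countable := by
    rw [Set.countable_univ_iff, Set.countable_coe_iff]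
    exact hS4unc
  obtain ⟨𝒰, h𝒰⟩ := ultra_of_uncountable hσunc
  set W : T → Set ↥S4 := fun u => {g : ↥S4 | ∃ v ∈ E g.1, u < v} with hW
  have hfibE : ∀ p : T, {g : ↥S4 | p ∈ E g.1}.Countable := by
    intro p
    apply Set.Subsingleton.countable
    intro g hg g' hg'
    by_contra hne
    have hne' : g.1 ≠ g'.1 := fun h => hne (Subtype.ext h)
    have := hEdisj g.1 (hS4S3 g.2) g'.1 (hS4S3 g'.2) hne'
    exact (Set.eq_empty_iff_forall_notMem.1 this p) ⟨hg, hg'⟩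
  have hWsel : ∀ f : ↥S4, ∃ u ∈ E f.1, W u ∈ 𝒰 := by
    intro f
    have hEfin : (E f.1).Finite := (hdomfin f.1 (hS4S f.2)).diff
    set Lrev : Set ↥S4 := {g | ∃ v ∈ E g.1, ∃ t ∈ E f.1, v < t} with hLrev
    have hLrevc : Lrev.Countable := by
      have hsub : Lrev ⊆ ⋃ t ∈ E f.1, ⋃ p ∈ {s : T | s < t}, {g : ↥S4 | p ∈ E g.1} := by
        rintro g ⟨v, hv, t, ht, hvt⟩
        exact Set.mem_biUnion ht (Set.mem_biUnion hvt hv)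
      exact (Set.Countable.biUnion (hEfin.countable) (fun t _ =>
        Set.Countable.biUnion (hpredc t) (fun p _ => hfibE p))).mono hsub
    have hsingf : ({g : ↥S4 | g.1 = f.1} : Set ↥S4).Countable := by
      apply Set.Subsingleton.countable
      intro g hg g' hg'
      exact Subtype.ext (hg.trans hg'.symm)
    have hcover : ({g : ↥S4 | g.1 = f.1} ∪ Lrev)ᶜ ⊆ ⋃ u ∈ hEfin.toFinset, W u := by
      intro g hg
      rw [Set.mem_compl_iff, Set.mem_union] at hg
      push_neg at hg
      obtain ⟨hgf, hgL⟩ := hg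
      have hne' : f.1 ≠ g.1 := fun h => hgf h.symm
      have hnc := hinc f.1 (hS4S f.2) g.1 (hS4S g.2) hne'
      rcases reasons (hS (hS4S f.2)) (hS (hS4S g.2)) hnc with
        ⟨t, hft, hgt, hne⟩ | ⟨u, v, huv, hfu, hgu, hgv, hfv⟩ | ⟨u, v, huv, hgu, hfu, hfv, hgv⟩
      · exfalso
        have htR : t ∈ (↑R : Set T) := by
          rw [← hS2root f.1 (hS3S2 (hS4S3 f.2)) g.1 (hS3S2 (hS4S3 g.2)) hne']
          exact ⟨hft, hgt⟩
        exact hne (hagreeR f.1 (hS4S3 f.2) g.1 (hS4S3 g.2) t htR)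
      · -- u ∈ E f, v ∈ E g, u < v
        have huE : u ∈ E f.1 := by
          refine ⟨hfu, ?_⟩
          intro huR
          exact (hRsub g.1 (hS4S3 g.2) huR) hgu
        have hvE : v ∈ E g.1 := by
          refine ⟨hgv, ?_⟩
          intro hvR
          exact (hRsub f.1 (hS4S3 f.2) hvR) hfv
        exact Set.mem_biUnion (hEfin.mem_toFinset.2 huE) ⟨v, hvE, huv⟩
      · exfalso
        apply hgL
        have huE : u ∈ E g.1 := by
          refine ⟨hgu, ?_⟩
          intro huR
          exact (hRsub f.1 (hS4S3 f.2) huR) hfu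
        have hvE : v ∈ E f.1 := by
          refine ⟨hfv, ?_⟩
          intro hvR
          exact (hRsub g.1 (hS4S3 g.2) hvR) hgv
        exact ⟨u, huE, v, hvE, huv⟩
    have hUmem : (⋃ u ∈ hEfin.toFinset, W u) ∈ 𝒰 := by
      have hc : ({g : ↥S4 | g.1 = f.1} ∪ Lrev).Countable := hsingf.union hLrevc
      have hmemc : ({g : ↥S4 | g.1 = f.1} ∪ Lrev)ᶜ ∈ 𝒰 :=
        (Ultrafilter.compl_mem_iff_notMem).2 (h𝒰 _ hc)
      exact (Ultrafilter.mem_coe).1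
        (Filter.mem_of_superset ((Ultrafilter.mem_coe).2 hmemc) hcover)
    obtain ⟨u, hu, hWu⟩ := ultra_finset_biUnion 𝒰 hEfin.toFinset W hUmem
    exact ⟨u, hEfin.mem_toFinset.1 hu, hWu⟩
  choose tf htf1 htf2 using hWsel
  -- Step 7: the chosen points form a set of bounded width
  set Z : Set T := Set.range tf with hZ
  have hZA : Z ⊆ A := by
    rintro z ⟨f, rfl⟩
    exact hdomsub f.1 (hS4S f.2) (htf1 f).1
  have hbound : ∀ F : Finset T, ↑F ⊆ Z →
      (∀ a ∈ F, ∀ b ∈ F, a ≠ b → ¬ a ≤ b ∧ ¬ b ≤ a) → F.card ≤ N := by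
    intro F hFZ hFanti
    have hsel2 : ∀ z ∈ F, ∃ fz : ↥S4, tf fz = z := fun z hz => hFZ (by exact_mod_cast hz)
    choose ζ hζ using hsel2
    have hmemU : (⋂ z ∈ F, W z) ∈ 𝒰 := by
      rw [← Ultrafilter.mem_coe]
      refine (Filter.biInter_finset_mem F).2 ?_
      intro z hz
      rw [← hζ z hz]
      exact htf2 (ζ z hz)
    obtain ⟨g, hg⟩ := Ultrafilter.nonempty_of_mem hmemU
    have hgW : ∀ z : T, ∃ v : T, z ∈ F → (v ∈ E g.1 ∧ z < v) := by
      intro z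
      by_cases hz : z ∈ F
      · obtain ⟨v, hv1, hv2⟩ := Set.mem_iInter₂.1 hg z hz
        exact ⟨v, fun _ => ⟨hv1, hv2⟩⟩
      · exact ⟨z, fun h => absurd h hz⟩
    choose vs hvs using hgW
    have hgfin : (dom g.1).Finite := hdomfin g.1 (hS4S g.2)
    have hmaps : ∀ z ∈ F, vs z ∈ hgfin.toFinset := by
      intro z hz
      exact hgfin.mem_toFinset.2 ((hvs z hz).1).1
    have hinjOn : Set.InjOn vs ↑F := by
      intro z hz z' hz' heq
      by_contra hne
      obtain ⟨h1, h2⟩ := (hvs z (by exact_mod_cast hz))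
      obtain ⟨h1', h2'⟩ := (hvs z' (by exact_mod_cast hz'))
      rcases hlin (vs z) z z' h2 (heq ▸ h2') with h | h
      · exact (hFanti z (by exact_mod_cast hz) z' (by exact_mod_cast hz') hne).1 h
      · exact (hFanti z (by exact_mod_cast hz) z' (by exact_mod_cast hz') hne).2 h
    have hcard := Finset.card_le_card_of_injOn vs hmaps hinjOn
    have hNcard : (hgfin.toFinset).card = N := by
      have := (hS2S1 (hS3S2 (hS4S3 g.2))).2
      rwa [Set.ncard_eq_toFinset_card _ hgfin] at this
    omega
  have hZc : Z.Countable := width_lemma hlin hpredc hchains N Z hZA hbound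
  -- Step 8: conclude
  haveI := hZc.to_subtype
  have hcS4 : Countable ↥S4 := by
    refine Function.Injective.countable
      (f := fun f : ↥S4 => (⟨tf f, Set.mem_range_self f⟩ : ↥Z)) ?_
    intro f g hfg
    have h1 : tf f = tf g := congrArg Subtype.val hfg
    by_contra hne
    have hne' : f.1 ≠ g.1 := fun h => hne (Subtype.ext h)
    have hd := hEdisj f.1 (hS4S3 f.2) g.1 (hS4S3 g.2) hne'
    exact (Set.eq_empty_iff_forall_notMem.1 hd (tf f)) ⟨htf1 f, h1 ▸ htf1 g⟩
  exact hS4unc (Set.countable_coe_iff.1 hcS4)
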